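/- Let H be a finite dimensional hereditary algebra and T a tilting H-module. If X is a module with Hom(T, X) = 0, then the minimal left add(τT)-approximation X → C is a monomorphism, where τ denotes the Auslander–Reiten translate. -/

import Mathlib

open CategoryTheory

/-- `Ext¹` of modules, as an abelian group (`ℤ`-module). -/
noncomputable def ext1 (Λ : Type) [Ring Λ] (M N : ModuleCat Λ) : ModuleCat ℤ :=
  ((Ext ℤ (ModuleCat Λ) 1).obj (Opposite.op M)).obj N

/-- `X ∈ add T`: `X` is a direct summand of a finite direct sum of copies of `T`. -/
def memAdd (Λ : Type) [Ring Λ] (T X : ModuleCat Λ) : Prop :=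
  ∃ (n : ℕ) (i : X →ₗ[Λ] (Fin n → T)) (p : (Fin n → T) →ₗ[Λ] X),
    p ∘ₗ i = LinearMap.id

/-- `X ∈ Sub T`: `X` is a submodule of a module in `add T`. -/
def memSub (Λ : Type) [Ring Λ] (T X : ModuleCat Λ) : Prop :=
  ∃ (n : ℕ) (i : X →ₗ[Λ] (Fin n → T)), Function.Injective i

/-- `T` is a tilting module: `pd T ≤ 1`, `Ext¹(T,T) = 0`, and there is an exact sequence
`0 → Λ → T₀ → T₁ → 0` with `T₀, T₁ ∈ add T`. -/
structure IsTilting (Λ : Type) [Ring Λ] (T : ModuleCat Λ) : Prop where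
  pd : ∃ (n : ℕ) (p : (Fin n → Λ) →ₗ[Λ] T), Function.Surjective p ∧
    Projective (ModuleCat.of Λ ↥(LinearMap.ker p))
  ext_vanish : Limits.IsZero (ext1 Λ T T)
  cores : ∃ (T₀ T₁ : ModuleCat.{0} Λ), memAdd Λ T T₀ ∧ memAdd Λ T T₁ ∧
    ∃ (f : Λ →ₗ[Λ] T₀) (g : T₀ →ₗ[Λ] T₁),
      Function.Injective f ∧ Function.Surjective g ∧ LinearMap.range f = LinearMap.ker g

/-- `f : A → C` is a minimal left `add N`-approximation. -/
def IsMinimalLeftAddApprox (Λ : Type) [Ring Λ] (N A C : ModuleCat Λ)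
    (f : A →ₗ[Λ] C) : Prop :=
  memAdd Λ N C ∧
  (∀ (N' : ModuleCat.{0} Λ), memAdd Λ N N' → ∀ g : A →ₗ[Λ] N',
    ∃ h : C →ₗ[Λ] N', h ∘ₗ f = g) ∧
  (∀ e : C →ₗ[Λ] C, e ∘ₗ f = f → Function.Bijective e)

/-- Let `H` be a finite dimensional hereditary algebra and `T` a tilting module, with `τT` the
Auslander–Reiten translate of `T`, so that the torsion-free class `{X : Hom(T,X) = 0}` equals
`Sub(τT)`.  If `X` is a finitely generated module with `Hom(T, X) = 0`, then the minimal left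
`add(τT)`-approximation `X → C` is a monomorphism. -/
theorem stmt8 (k : Type) [Field k] (H : Type) [Ring H] [Algebra k H]
    [FiniteDimensional k H]
    (hher : ∀ P : ModuleCat H, Projective P →
      ∀ N : Submodule H P, Projective (ModuleCat.of H N))
    (T : ModuleCat H) [Module.Finite H T] (hT : IsTilting H T)
    (τT : ModuleCat H) [Module.Finite H τT]
    (hτT : ∀ Y : ModuleCat.{0} H, Module.Finite H Y →
      ((∀ f : T →ₗ[H] Y, f = 0) ↔ memSub H τT Y))
    (X C : ModuleCat H) [Module.Finite H X] [Module.Finite H C]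
    (hX : ∀ f : T →ₗ[H] X, f = 0)
    (f : X →ₗ[H] C) (happrox : IsMinimalLeftAddApprox H τT X C f) :
    Function.Injective f := by
  -- Everything is finitely generated over `H : Type 0`, hence small.
  haveI sX : Small.{0} X := by
    obtain ⟨n, p, hp⟩ := Module.Finite.exists_fin' H X
    exact small_of_surjective hp
  haveI sτT : Small.{0} τT := by
    obtain ⟨n, p, hp⟩ := Module.Finite.exists_fin' H τT
    exact small_of_surjective hp
  set e : X ≃ₗ[H] Shrink.{0} X := (Shrink.linearEquiv H X).symm with he
  haveI : Module.Finite H (Shrink.{0} X) := Module.Finite.equiv e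
  -- `Hom(T, Shrink X) = 0`
  have hX' : ∀ g : T →ₗ[H] ModuleCat.of H (Shrink.{0} X), g = 0 := by
    intro g
    have h0 : (e.symm.toLinearMap ∘ₗ g) = 0 := hX _
    have : e.toLinearMap ∘ₗ (e.symm.toLinearMap ∘ₗ g) = g := by
      ext x; simp
    rw [h0] at this
    simpa using this.symm
  obtain ⟨n, i, hi⟩ := (hτT (ModuleCat.of H (Shrink.{0} X)) (Module.Finite.equiv e)).mp hX'
  -- injection `j : X → (Fin n → τT)`
  have hj : Function.Injective (i ∘ₗ (e : X →ₗ[H] Shrink.{0} X)) :=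
    hi.comp e.injective
  -- the small model of `Fin n → τT` is in `add τT`
  set eq : (Fin n → τT) ≃ₗ[H] Shrink.{0} (Fin n → τT) :=
    (Shrink.linearEquiv H (Fin n → τT)).symm with heq
  have hmem : memAdd H τT (ModuleCat.of H (Shrink.{0} (Fin n → τT))) := by
    refine ⟨n, eq.symm.toLinearMap, eq.toLinearMap, ?_⟩
    ext x; simp
  obtain ⟨h, hh⟩ := happrox.2.1 (ModuleCat.of H (Shrink.{0} (Fin n → τT))) hmem
    (eq.toLinearMap ∘ₗ (i ∘ₗ (e : X →ₗ[H] Shrink.{0} X)))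
  have hinj : Function.Injective (h ∘ₗ f) := by
    rw [hh]
    exact (eq.injective.comp hj :)
  exact Function.Injective.of_comp (f := h) hinj
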